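/- Let (K,|·|) be an ultrametric field, n ≥ 1, U ⊆ K^n a compact locally cartesian subset, and 𝒳 a cover of U by relatively open subsets of U. Then there exist m ∈ ℕ and pairwise disjoint clopen cartesian subsets Q₁, …, Q_m of K^n such that, setting W_j = U ∩ Q_j, the sets W₁, …, W_m are pairwise disjoint, compact, cartesian, relatively open in U, their union is U, and each W_j is contained in some member of 𝒳. -/

import Mathlib

/-- A subset of `K^n` is *cartesian* if it is a product `V₁ × ⋯ × Vₙ` of subsets of `K`
none of which has an isolated point. -/
def IsCartesianSet {K : Type*} [TopologicalSpace K] {n : ℕ} (V : Set (Fin n → K)) : Prop :=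
  ∃ W : Fin n → Set K, V = Set.univ.pi W ∧ ∀ i, Preperfect (W i)

/-- A subset of `K^n` is *locally cartesian* if each of its points has a relatively open
neighbourhood in it which is cartesian. -/
def IsLocallyCartesian {K : Type*} [TopologicalSpace K] {n : ℕ} (U : Set (Fin n → K)) : Prop :=
  ∀ x ∈ U, ∃ V : Set (Fin n → K),
    x ∈ V ∧ V ⊆ U ∧ (∃ O, IsOpen O ∧ V = U ∩ O) ∧ IsCartesianSet V

/-- A finite product of ultrametric spaces is ultrametric. -/
instance piIsUltrametricDist {ι : Type*} [Fintype ι] {X : ι → Type*}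
    [∀ i, PseudoMetricSpace (X i)] [∀ i, IsUltrametricDist (X i)] :
    IsUltrametricDist (∀ i, X i) := by
  constructor
  intro x y z
  have h0 : (0 : ℝ) ≤ max (dist x y) (dist y z) := le_max_of_le_left dist_nonneg
  rw [dist_pi_le_iff h0]
  intro i
  exact (IsUltrametricDist.dist_triangle_max (x i) (y i) (z i)).trans
    (max_le_max (dist_le_pi_dist x y i) (dist_le_pi_dist y z i))

/-- Closed balls of positive radius in a nontrivially normed ultrametric field
have no isolated points. -/
lemma preperfect_closedBall_ultra {K : Type*} [NontriviallyNormedField K]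
    [IsUltrametricDist K] (c : K) {r : ℝ} (hr : 0 < r) :
    Preperfect (Metric.closedBall c r) := by
  intro y hy
  rw [accPt_iff_nhds]
  intro V hV
  obtain ⟨ε, hε, hεV⟩ := Metric.mem_nhds_iff.mp hV
  obtain ⟨t, ht0, htε⟩ := NormedField.exists_norm_lt K (lt_min hε hr)
  have hdist : dist (y + t) y = ‖t‖ := by
    rw [dist_eq_norm]; congr 1; ring
  refine ⟨y + t, ⟨hεV ?_, ?_⟩, ?_⟩
  · rw [Metric.mem_ball, hdist]
    exact htε.trans_le (min_le_left _ _)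
  · rw [Metric.mem_closedBall]
    refine (IsUltrametricDist.dist_triangle_max (y + t) y c).trans (max_le ?_ hy)
    rw [hdist]
    exact (htε.trans_le (min_le_right _ _)).le
  · intro h
    have : t = 0 := by
      have := congrArg (· - y) h
      simpa using this
    rw [this, norm_zero] at ht0
    exact lt_irrefl _ ht0

/-- **Decomposition of compact locally cartesian sets** (Lemma `deccompinct`).
Over an ultrametric field, a compact locally cartesian set `U ⊆ K^n` can be decomposed,
subordinate to any relatively open cover `𝒳`, as a finite disjoint union of compact
cartesian relatively open pieces `W_j = U ∩ Q_j` cut out by disjoint clopen cartesian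
subsets `Q_j` of `K^n`. -/
theorem compact_locallyCartesian_decomposition
    {K : Type*} [NontriviallyNormedField K] [IsUltrametricDist K]
    (n : ℕ) (hn : 1 ≤ n) (U : Set (Fin n → K))
    (hUc : IsCompact U) (hUlc : IsLocallyCartesian U)
    (𝒳 : Set (Set (Fin n → K)))
    (h𝒳o : ∀ X ∈ 𝒳, ∃ O, IsOpen O ∧ X = U ∩ O)
    (h𝒳cov : U ⊆ ⋃₀ 𝒳) :
    ∃ (m : ℕ) (Q : Fin m → Set (Fin n → K)),
      (∀ j, IsClopen (Q j)) ∧ (∀ j, IsCartesianSet (Q j)) ∧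
      Pairwise (Function.onFun Disjoint Q) ∧
      Pairwise (Function.onFun Disjoint (fun j => U ∩ Q j)) ∧
      (⋃ j, U ∩ Q j) = U ∧
      (∀ j, IsCompact (U ∩ Q j)) ∧
      (∀ j, IsCartesianSet (U ∩ Q j)) ∧
      (∀ j, ∃ O, IsOpen O ∧ U ∩ Q j = U ∩ O) ∧
      (∀ j, ∃ X ∈ 𝒳, U ∩ Q j ⊆ X) := by
  classical
  -- Step 1: around each point of `U` choose a good closed ball.
  have key : ∀ x ∈ U, ∃ r : ℝ, 0 < r ∧
      IsCartesianSet (U ∩ Metric.closedBall x r) ∧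
      ∃ X ∈ 𝒳, U ∩ Metric.closedBall x r ⊆ X := by
    intro x hx
    obtain ⟨V, hxV, hVU, ⟨O, hO, hVO⟩, W, hVW, hWp⟩ := hUlc x hx
    obtain ⟨X, hX𝒳, hxX⟩ := h𝒳cov hx
    obtain ⟨O', hO', hXO'⟩ := h𝒳o X hX𝒳
    have hxO : x ∈ O := by rw [hVO] at hxV; exact hxV.2
    have hxO' : x ∈ O' := by rw [hXO'] at hxX; exact hxX.2
    obtain ⟨ε, hε, hball⟩ := Metric.isOpen_iff.mp (hO.inter hO') x ⟨hxO, hxO'⟩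
    have hε2 : (0 : ℝ) < ε / 2 := by positivity
    have hBsub : Metric.closedBall x (ε / 2) ⊆ O ∩ O' :=
      (Metric.closedBall_subset_ball (by linarith)).trans hball
    refine ⟨ε / 2, hε2, ?_, X, hX𝒳, ?_⟩
    · have hUB : U ∩ Metric.closedBall x (ε / 2)
          = Set.univ.pi (fun i => Metric.closedBall (x i) (ε / 2) ∩ W i) := by
        have h1 : U ∩ Metric.closedBall x (ε / 2) = V ∩ Metric.closedBall x (ε / 2) := by
          rw [hVO]
          ext y
          constructor
          · rintro ⟨hyU, hyB⟩
            exact ⟨⟨hyU, (hBsub hyB).1⟩, hyB⟩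
          · rintro ⟨⟨hyU, _⟩, hyB⟩
            exact ⟨hyU, hyB⟩
        rw [h1, hVW, closedBall_pi x hε2.le, Set.inter_comm,
          ← Set.pi_inter_distrib]
      refine ⟨_, hUB, fun i => ?_⟩
      exact (hWp i).open_inter (IsUltrametricDist.isOpen_closedBall (x i) hε2.ne')
    · rw [hXO']
      rintro y ⟨hyU, hyB⟩
      exact ⟨hyU, (hBsub hyB).2⟩
  choose! r hr hcart hsub using key
  -- Step 2: extract a finite subcover by closed balls.
  obtain ⟨t, htU, htcov⟩ := hUc.elim_nhds_subcover (fun x => Metric.closedBall x (r x))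
      (fun x hx => Metric.closedBall_mem_nhds x (hr x hx))
  set S : Finset (Set (Fin n → K)) := t.image (fun x => Metric.closedBall x (r x)) with hS
  set T : Finset (Set (Fin n → K)) := S.filter (fun B => ∀ C ∈ S, B ⊆ C → B = C) with hT
  have hTS : T ⊆ S := Finset.filter_subset _ _
  -- every ball of the subcover is contained in a maximal one
  have hmax : ∀ B ∈ S, ∃ C ∈ T, B ⊆ C := by
    intro B hB
    obtain ⟨C, hC, hCmax⟩ := Set.Finite.exists_maximalFor id {C | C ∈ S ∧ B ⊆ C}
      (S.finite_toSet.subset (fun C hC => hC.1)) ⟨B, hB, subset_rfl⟩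
    refine ⟨C, Finset.mem_filter.mpr ⟨hC.1, fun D hD hCD => ?_⟩, hC.2⟩
    exact subset_antisymm hCD (hCmax ⟨hD, hC.2.trans hCD⟩ hCD)
  have hTball : ∀ B ∈ T, ∃ x ∈ U, 0 < r x ∧ B = Metric.closedBall x (r x) := by
    intro B hB
    obtain ⟨x, hxt, hxB⟩ := Finset.mem_image.mp (hTS hB)
    exact ⟨x, htU x hxt, hr x (htU x hxt), hxB.symm⟩
  -- index the maximal balls
  refine ⟨T.card, fun j => ((T.equivFin.symm j : T) : Set (Fin n → K)), ?_, ?_, ?_, ?_, ?_, ?_, ?_, ?_, ?_⟩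
  · intro j
    beta_reduce
    obtain ⟨x, _, hrx, hB⟩ := hTball _ (T.equivFin.symm j).2
    rw [hB]
    exact IsUltrametricDist.isClopen_closedBall x hrx.ne'
  · intro j
    beta_reduce
    obtain ⟨x, _, hrx, hB⟩ := hTball _ (T.equivFin.symm j).2
    rw [hB, closedBall_pi x hrx.le]
    exact ⟨_, rfl, fun i => preperfect_closedBall_ultra (x i) hrx⟩
  · intro j k hjk
    have hne : ((T.equivFin.symm j : T) : Set (Fin n → K))
        ≠ ((T.equivFin.symm k : T) : Set (Fin n → K)) := by
      intro h
      exact hjk (T.equivFin.symm.injective (Subtype.ext h))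
    obtain ⟨x, _, hrx, hBx⟩ := hTball _ (T.equivFin.symm j).2
    obtain ⟨y, _, hry, hBy⟩ := hTball _ (T.equivFin.symm k).2
    have hjmax := (Finset.mem_filter.mp (T.equivFin.symm j).2).2
    have hkmax := (Finset.mem_filter.mp (T.equivFin.symm k).2).2
    have htri := IsUltrametricDist.closedBall_subset_trichotomy x y (r x) (r y)
    rw [← hBx, ← hBy] at htri
    rcases htri with h | h | h
    · exact absurd (hjmax _ (hTS (T.equivFin.symm k).2) h) hne
    · exact absurd (hkmax _ (hTS (T.equivFin.symm j).2) h).symm hne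
    · exact h
  · intro j k hjk
    have hne : ((T.equivFin.symm j : T) : Set (Fin n → K))
        ≠ ((T.equivFin.symm k : T) : Set (Fin n → K)) := by
      intro h
      exact hjk (T.equivFin.symm.injective (Subtype.ext h))
    obtain ⟨x, _, hrx, hBx⟩ := hTball _ (T.equivFin.symm j).2
    obtain ⟨y, _, hry, hBy⟩ := hTball _ (T.equivFin.symm k).2
    have hjmax := (Finset.mem_filter.mp (T.equivFin.symm j).2).2
    have hkmax := (Finset.mem_filter.mp (T.equivFin.symm k).2).2
    have htri := IsUltrametricDist.closedBall_subset_trichotomy x y (r x) (r y)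
    rw [← hBx, ← hBy] at htri
    rcases htri with h | h | h
    · exact absurd (hjmax _ (hTS (T.equivFin.symm k).2) h) hne
    · exact absurd (hkmax _ (hTS (T.equivFin.symm j).2) h).symm hne
    · exact (h.mono (Set.inter_subset_right) (Set.inter_subset_right))
  · apply Set.Subset.antisymm
    · exact Set.iUnion_subset fun j => Set.inter_subset_left
    · intro x hx
      obtain ⟨y, hyt, hyB⟩ := Set.mem_iUnion₂.mp (htcov hx)
      have hBS : Metric.closedBall y (r y) ∈ S := Finset.mem_image_of_mem _ hyt
      obtain ⟨C, hCT, hBC⟩ := hmax _ hBS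
      refine Set.mem_iUnion.mpr ⟨T.equivFin ⟨C, hCT⟩, ?_⟩
      beta_reduce
      rw [Equiv.symm_apply_apply]
      exact ⟨hx, hBC hyB⟩
  · intro j
    beta_reduce
    obtain ⟨x, _, hrx, hB⟩ := hTball _ (T.equivFin.symm j).2
    rw [hB]
    exact hUc.inter_right Metric.isClosed_closedBall
  · intro j
    beta_reduce
    obtain ⟨x, hxU, hrx, hB⟩ := hTball _ (T.equivFin.symm j).2
    rw [hB]
    exact hcart x hxU
  · intro j
    beta_reduce
    obtain ⟨x, _, hrx, hB⟩ := hTball _ (T.equivFin.symm j).2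
    exact ⟨_, by rw [hB]; exact IsUltrametricDist.isOpen_closedBall x hrx.ne', rfl⟩
  · intro j
    beta_reduce
    obtain ⟨x, hxU, hrx, hB⟩ := hTball _ (T.equivFin.symm j).2
    rw [hB]
    exact hsub x hxU
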